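/- For integers d2 ≥ d1 ≥ 2, the quadratic polynomial P̃_X(k) = d2(d1·d2 - 2d1 - d2 + 1)k² + 2(d2 - 1)(d1 - 1)d1·k + d1²(d1 - 1) has a root k* in the open interval (-d1/d2, 0), and P̃_X is negative on [-d1/d2, k*) and positive on (k*, 1). -/
import Mathlib


/-- For integers d2 ≥ d1 ≥ 2, the quadratic
P̃_X(k) = d2(d1·d2 - 2d1 - d2 + 1)k² + 2(d2-1)(d1-1)d1·k + d1²(d1-1)
has a root k* in (-d1/d2, 0), is negative on [-d1/d2, k*) and positive on (k*, 1). -/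
theorem stmt_0 (d1 d2 : ℕ) (h1 : 2 ≤ d1) (h2 : d1 ≤ d2) :
    ∃ kstar : ℝ, -(d1 : ℝ)/d2 < kstar ∧ kstar < 0 ∧
      ((d2 : ℝ) * (d1*d2 - 2*d1 - d2 + 1) * kstar^2
        + 2*(d2 - 1)*(d1 - 1)*d1 * kstar + d1^2*(d1 - 1) = 0) ∧
      (∀ k : ℝ, -(d1 : ℝ)/d2 ≤ k → k < kstar →
        (d2 : ℝ) * (d1*d2 - 2*d1 - d2 + 1) * k^2
          + 2*(d2 - 1)*(d1 - 1)*d1 * k + d1^2*(d1 - 1) < 0) ∧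
      (∀ k : ℝ, kstar < k → k < 1 →
        0 < (d2 : ℝ) * (d1*d2 - 2*d1 - d2 + 1) * k^2
          + 2*(d2 - 1)*(d1 - 1)*d1 * k + d1^2*(d1 - 1)) := by
  have ha : (2:ℝ) ≤ (d1:ℝ) := by exact_mod_cast h1
  have hab : (d1:ℝ) ≤ (d2:ℝ) := by exact_mod_cast h2
  set a : ℝ := (d1:ℝ) with ha'
  set b : ℝ := (d2:ℝ) with hb'
  have hb0 : (0:ℝ) < b := by linarith
  have ha0 : (0:ℝ) < a := by linarith
  set f : ℝ → ℝ := fun k => b*(a*b-2*a-b+1)*k^2 + 2*(b-1)*(a-1)*a*k + a^2*(a-1) with hf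
  have hmono : ∀ x y : ℝ, -a/b ≤ x → x < y → y ≤ 1 → f x < f y := by
    intro x y hx hxy hy
    have hbx : -a ≤ b*x := by
      rw [div_le_iff₀ hb0] at hx
      nlinarith
    have hsum : 0 < b*(a*b-2*a-b+1)*(x+y) + 2*(b-1)*(a-1)*a := by
      rcases le_or_gt 0 (a*b-2*a-b+1) with hA | hA
      · have hby : -a ≤ b*y := by nlinarith
        have h2 : -(2*a) ≤ b*(x+y) := by nlinarith
        nlinarith [mul_le_mul_of_nonneg_left h2 hA]
      · have h2AB : 0 ≤ 2*(b*(a*b-2*a-b+1)) + 2*(b-1)*(a-1)*a := by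
          nlinarith [mul_nonneg (sub_nonneg.2 ha) (sub_nonneg.2 (ha.trans hab)), sq_nonneg (a-b)]
        have hAneg : b*(a*b-2*a-b+1) < 0 := mul_neg_of_pos_of_neg hb0 hA
        have hxy2 : x + y < 2 := by linarith
        nlinarith [mul_lt_mul_of_neg_left hxy2 hAneg]
    have hprod : 0 < (y - x) * (b*(a*b-2*a-b+1)*(x+y) + 2*(b-1)*(a-1)*a) :=
      mul_pos (by linarith) hsum
    simp only [hf]
    nlinarith [hprod]
  have hcont : ContinuousOn f (Set.Icc (-a/b) (0:ℝ)) := by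
    apply Continuous.continuousOn; fun_prop
  have hfl : f (-a/b) < 0 := by
    have : f (-a/b) = -(a^2)/b := by
      simp only [hf]; field_simp; ring
    rw [this, neg_div]
    have : 0 < a^2/b := by positivity
    linarith
  have hf0 : 0 < f 0 := by
    simp only [hf]
    nlinarith
  have hle : -a/b ≤ 0 := by
    apply div_nonpos_of_nonpos_of_nonneg <;> linarith
  obtain ⟨k, hkmem, hfk⟩ := intermediate_value_Ioo hle hcont ⟨hfl, hf0⟩
  refine ⟨k, hkmem.1, hkmem.2, hfk, ?_, ?_⟩
  · intro x hx1 hx2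
    have := hmono x k hx1 hx2 (by linarith [hkmem.2])
    simpa [hfk] using this
  · intro x hx1 hx2
    have := hmono k x hkmem.1.le hx1 hx2.le
    rw [hfk] at this
    exact this
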